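/- Let R be a commutative Euclidean domain and n a positive integer. Then every singular n×n matrix over R (i.e., every A ∈ Mₙ(R) with det A = 0) can be written as a product of idempotent matrices. -/

import Mathlib

open Matrix

namespace IdemProof

variable {R : Type*} [EuclideanDomain R]

/-- One step of a chain of unimodular vectors: two vectors sharing a dual vector. -/
def Step {k : ℕ} (x x' : Fin k → R) : Prop :=
  ∃ u : Fin k → R, x ⬝ᵥ u = 1 ∧ x' ⬝ᵥ u = 1

def Chain {k : ℕ} : (Fin k → R) → (Fin k → R) → Prop :=
  Relation.ReflTransGen Step

lemma vecMul_vecMulVec {k : ℕ} (v u w : Fin k → R) :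
    v ᵥ* (vecMulVec u w) = (v ⬝ᵥ u) • w := by
  funext j
  simp only [Matrix.vecMul, dotProduct, Matrix.vecMulVec_apply, Pi.smul_apply,
    smul_eq_mul, Finset.sum_mul, mul_assoc]

lemma mulVec_vecMulVec {k : ℕ} (u w z : Fin k → R) :
    (vecMulVec u w) *ᵥ z = (w ⬝ᵥ z) • u := by
  funext i
  simp only [Matrix.mulVec, dotProduct, Matrix.vecMulVec_apply, Pi.smul_apply,
    smul_eq_mul, Finset.mul_sum, mul_assoc]
  rw [Finset.sum_mul]
  apply Finset.sum_congr rfl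
  intro j _
  ring

lemma vecMulVec_mul {k : ℕ} (u w : Fin k → R) (B : Matrix (Fin k) (Fin k) R) :
    vecMulVec u w * B = vecMulVec u (w ᵥ* B) := by
  ext i j
  simp only [Matrix.mul_apply, Matrix.vecMulVec_apply, Matrix.vecMul, dotProduct,
    Finset.mul_sum, mul_assoc]

lemma vecMulVec_smul_right {k : ℕ} (u w : Fin k → R) (c : R) :
    vecMulVec u (c • w) = c • vecMulVec u w := by
  ext i j
  simp only [Matrix.vecMulVec_apply, Pi.smul_apply, smul_eq_mul, Matrix.smul_apply]
  ring

lemma idem_one_sub_vecMulVec {k : ℕ} (u v : Fin k → R) (h : v ⬝ᵥ u = 1) :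
    (1 - vecMulVec u v) * (1 - vecMulVec u v) = 1 - vecMulVec u v := by
  have h3 : vecMulVec u v * vecMulVec u v = vecMulVec u v := by
    rw [vecMulVec_mul, vecMul_vecMulVec, h, one_smul]
  have expand : (1 - vecMulVec u v) * (1 - vecMulVec u v)
      = 1 - vecMulVec u v - vecMulVec u v + vecMulVec u v * vecMulVec u v := by
    noncomm_ring
  rw [expand, h3]
  abel

lemma step_extract {k : ℕ} (v v' u : Fin k → R) (A : Matrix (Fin k) (Fin k) R)
    (hA : v ᵥ* A = 0) (h1 : v ⬝ᵥ u = 1) (h2 : v' ⬝ᵥ u = 1) :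
    ∃ E A', E * E = E ∧ A = E * A' ∧ v' ᵥ* A' = 0 ∧
      ∀ z, A *ᵥ z = 0 → A' *ᵥ z = 0 := by
  refine ⟨1 - vecMulVec u v, A - vecMulVec u (v' ᵥ* A),
    idem_one_sub_vecMulVec u v h1, ?_, ?_, ?_⟩
  · have e1 : vecMulVec u v * A = 0 := by
      rw [vecMulVec_mul, hA]
      ext i j
      simp [Matrix.vecMulVec_apply]
    have e2 : vecMulVec u v * vecMulVec u (v' ᵥ* A) = vecMulVec u (v' ᵥ* A) := by
      rw [vecMulVec_mul, vecMul_vecMulVec, h1, one_smul]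
    have expand : (1 - vecMulVec u v) * (A - vecMulVec u (v' ᵥ* A))
        = A - vecMulVec u (v' ᵥ* A) - vecMulVec u v * A
          + vecMulVec u v * vecMulVec u (v' ᵥ* A) := by
      noncomm_ring
    rw [expand, e1, e2]
    abel
  · rw [Matrix.vecMul_sub, vecMul_vecMulVec, h2, one_smul, sub_self]
  · intro z hz
    rw [Matrix.sub_mulVec, hz, mulVec_vecMulVec, ← dotProduct_mulVec, hz]
    simp

lemma engine {k : ℕ} (w : Fin k → R) :
    ∀ (v : Fin k → R), Chain (R := R) v w →
    ∀ (A : Matrix (Fin k) (Fin k) R), v ᵥ* A = 0 →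
    ∃ (l : List (Matrix (Fin k) (Fin k) R)) (A' : Matrix (Fin k) (Fin k) R),
      (∀ E ∈ l, E * E = E) ∧ A = l.prod * A' ∧ w ᵥ* A' = 0 ∧
      ∀ z, A *ᵥ z = 0 → A' *ᵥ z = 0 := by
  intro v hc
  induction hc using Relation.ReflTransGen.head_induction_on with
  | refl =>
    intro A hA
    exact ⟨[], A, by simp, by simp, hA, fun z hz => hz⟩
  | head hstep _ ih =>
    intro A hA
    obtain ⟨u, h1, h2⟩ := hstep
    obtain ⟨E, A'', hE, hEA, hA'', hker⟩ := step_extract _ _ u A hA h1 h2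
    obtain ⟨l, A', hl, hprod, hw, hker'⟩ := ih A'' hA''
    refine ⟨E :: l, A', ?_, ?_, hw, ?_⟩
    · rintro F hF
      rcases List.mem_cons.1 hF with rfl | hF
      · exact hE
      · exact hl F hF
    · rw [List.prod_cons, mul_assoc, ← hprod, ← hEA]
    · intro z hz
      exact hker' z (hker z hz)



/-- Extract gcd from a nonzero vector: `w = g • b` with `b` unimodular. -/
lemma extract_unimodular : ∀ {k : ℕ} (w : Fin (k + 1) → R), w ≠ 0 →
    ∃ (g : R) (b u : Fin (k + 1) → R), g ≠ 0 ∧ (∀ i, w i = g * b i) ∧ b ⬝ᵥ u = 1 := by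
  classical
  intro k
  induction k with
  | zero =>
    intro w hw
    have h0 : w 0 ≠ 0 := by
      intro h
      apply hw
      funext i
      rwa [Fin.eq_zero i]
    refine ⟨w 0, fun _ => 1, fun _ => 1, h0, fun i => by rw [Fin.eq_zero i]; ring, ?_⟩
    simp [dotProduct]
  | succ k ih =>
    intro w hw
    set tl : Fin (k + 1) → R := fun i => w i.succ with htl
    by_cases ht : tl = 0
    · have h0 : w 0 ≠ 0 := by
        intro h
        apply hw
        funext i
        refine Fin.cases h (fun j => ?_) i
        have : tl j = 0 := by rw [ht]; rfl
        simpa [htl] using this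
      refine ⟨w 0, Fin.cons 1 0, Fin.cons 1 0, h0, ?_, ?_⟩
      · intro i
        refine Fin.cases ?_ (fun j => ?_) i
        · simp
        · have : tl j = 0 := by rw [ht]; rfl
          simp only [htl] at this
          simp [this]
      · rw [dotProduct, Fin.sum_univ_succ]
        simp
    · obtain ⟨g₁, b₁, u₁, hg₁, hb₁, hbu₁⟩ := ih tl ht
      set g := EuclideanDomain.gcd (w 0) g₁ with hgdef
      have hg : g ≠ 0 := by
        intro h
        exact hg₁ (EuclideanDomain.gcd_eq_zero_iff.1 h).2
      obtain ⟨a', ha'⟩ := EuclideanDomain.gcd_dvd_left (w 0) g₁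
      obtain ⟨g'', hg''⟩ := EuclideanDomain.gcd_dvd_right (w 0) g₁
      have hbez := EuclideanDomain.gcd_eq_gcd_ab (w 0) g₁
      set s := EuclideanDomain.gcdA (w 0) g₁
      set t := EuclideanDomain.gcdB (w 0) g₁
      have key : a' * s + g'' * t = 1 := by
        apply mul_left_cancel₀ hg
        rw [mul_one]
        calc g * (a' * s + g'' * t) = (g * a') * s + (g * g'') * t := by ring
        _ = w 0 * s + g₁ * t := by rw [← ha', ← hg'']
        _ = g := hbez.symm
      refine ⟨g, Fin.cons a' (fun i => g'' * b₁ i), Fin.cons s (fun i => t * u₁ i), hg, ?_, ?_⟩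
      · intro i
        refine Fin.cases ?_ (fun j => ?_) i
        · simpa using ha'
        · have : w j.succ = g₁ * b₁ j := hb₁ j
          rw [this, hg'']
          simp [mul_assoc, hgdef]
      · rw [dotProduct, Fin.sum_univ_succ]
        simp only [Fin.cons_zero, Fin.cons_succ]
        have : ∀ j : Fin (k + 1), (g'' * b₁ j) * (t * u₁ j) = (g'' * t) * (b₁ j * u₁ j) := by
          intro j; ring
        rw [Finset.sum_congr rfl (fun j _ => this j), ← Finset.mul_sum]
        have : ∑ j, b₁ j * u₁ j = 1 := hbu₁
        rw [this, mul_one, key]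

/-- Bézout combination realizing a common divisor of all entries. -/
lemma gcd_combo : ∀ {k : ℕ} (w : Fin (k + 1) → R),
    ∃ (M : R) (c : Fin (k + 1) → R), (∀ i, M ∣ w i) ∧ c ⬝ᵥ w = M := by
  classical
  intro k
  induction k with
  | zero =>
    intro w
    refine ⟨w 0, fun _ => 1, fun i => by rw [Fin.eq_zero i], ?_⟩
    simp [dotProduct]
  | succ k ih =>
    intro w
    obtain ⟨M₁, c₁, hM₁, hc₁⟩ := ih (fun i => w i.succ)
    set M := EuclideanDomain.gcd (w 0) M₁ with hMdef
    have hbez := EuclideanDomain.gcd_eq_gcd_ab (w 0) M₁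
    set s := EuclideanDomain.gcdA (w 0) M₁
    set t := EuclideanDomain.gcdB (w 0) M₁
    refine ⟨M, Fin.cons s (fun i => t * c₁ i), ?_, ?_⟩
    · intro i
      refine Fin.cases ?_ (fun j => ?_) i
      · exact EuclideanDomain.gcd_dvd_left _ _
      · exact dvd_trans (EuclideanDomain.gcd_dvd_right _ _) (hM₁ j)
    · rw [dotProduct, Fin.sum_univ_succ]
      simp only [Fin.cons_zero, Fin.cons_succ]
      have : ∀ j : Fin (k + 1), (t * c₁ j) * (w j.succ) = t * (c₁ j * w j.succ) := by
        intro j; ring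
      rw [Finset.sum_congr rfl (fun j _ => this j), ← Finset.mul_sum]
      have h2 : ∑ j, c₁ j * w j.succ = M₁ := hc₁
      rw [h2, hMdef, hbez]
      ring

/-- Prime avoidance: if `1 ∈ (a, b, M)` and `M ≠ 0`, some `b + lam * a` is coprime to `M`. -/
lemma prime_avoid (a b M s t c : R) (hM : M ≠ 0) (h1 : s * a + t * b + c * M = 1) :
    ∃ lam : R, IsCoprime (b + lam * a) M := by
  classical
  set S := (UniqueFactorizationMonoid.factors M).filter (fun q => ¬ q ∣ b) with hS
  set lam := S.prod with hlam
  have key : ∀ p : R, Prime p → p ∣ M → ¬ p ∣ (b + lam * a) := by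
    intro p pp pM pd
    by_cases hb : p ∣ b
    · have pa : ¬ p ∣ a := by
        intro pa
        have : p ∣ 1 := by
          rw [← h1]
          exact dvd_add (dvd_add (pa.mul_left s) (hb.mul_left t)) (pM.mul_left c)
        exact pp.not_unit (isUnit_of_dvd_one this)
      have hla : p ∣ lam * a := by
        have := dvd_sub pd hb
        simpa [add_sub_cancel_left] using this
      rcases pp.dvd_mul.1 hla with pl | pa'
      · obtain ⟨q, hq, pq⟩ := pp.exists_mem_multiset_dvd pl
        rw [hS, Multiset.mem_filter] at hq
        have qprime : Prime q := UniqueFactorizationMonoid.prime_of_factor q hq.1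
        have assoc := pp.associated_of_dvd qprime pq
        exact hq.2 ((assoc.dvd_iff_dvd_left).1 hb)
      · exact pa pa'
    · have pprod : p ∣ (UniqueFactorizationMonoid.factors M).prod :=
        ((UniqueFactorizationMonoid.factors_prod hM).dvd_iff_dvd_right).2 pM
      obtain ⟨q, hq, pq⟩ := pp.exists_mem_multiset_dvd pprod
      have qnb : ¬ q ∣ b := fun qb => hb (pq.trans qb)
      have hqS : q ∈ S := by
        rw [hS, Multiset.mem_filter]
        exact ⟨hq, qnb⟩
      have plam : p ∣ lam := pq.trans (Multiset.dvd_prod hqS)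
      apply hb
      have := dvd_sub pd (plam.mul_right a)
      simpa [add_sub_cancel_right] using this
  refine ⟨lam, ?_⟩
  set x := b + lam * a with hx
  have hgd : EuclideanDomain.gcd x M ∣ M := EuclideanDomain.gcd_dvd_right x M
  have hgx : EuclideanDomain.gcd x M ∣ x := EuclideanDomain.gcd_dvd_left x M
  have hg0 : EuclideanDomain.gcd x M ≠ 0 := by
    intro h
    rw [h] at hgd
    exact hM (zero_dvd_iff.1 hgd)
  have hgu : IsUnit (EuclideanDomain.gcd x M) := by
    by_contra hnu
    obtain ⟨p, pirr, pdvd⟩ := WfDvdMonoid.exists_irreducible_factor hnu hg0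
    have pp : Prime p := (UniqueFactorizationMonoid.irreducible_iff_prime).1 pirr
    exact key p pp (pdvd.trans hgd) (pdvd.trans hgx)
  obtain ⟨g', hg'⟩ := hgu.exists_left_inv
  refine ⟨g' * EuclideanDomain.gcdA x M, g' * EuclideanDomain.gcdB x M, ?_⟩
  have hb2 := EuclideanDomain.gcd_eq_gcd_ab x M
  calc (g' * EuclideanDomain.gcdA x M) * x + (g' * EuclideanDomain.gcdB x M) * M
      = g' * (x * EuclideanDomain.gcdA x M + M * EuclideanDomain.gcdB x M) := by ring
    _ = g' * EuclideanDomain.gcd x M := by rw [← hb2]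
    _ = 1 := hg'


lemma dot_single {k : ℕ} (x : Fin k → R) (j : Fin k) (c : R) :
    x ⬝ᵥ Pi.single j c = x j * c := by
  classical
  simp [dotProduct, Pi.single_apply, mul_ite]

lemma cons_dot_cons {k : ℕ} (a b : R) (v u : Fin k → R) :
    (Fin.cons a v : Fin (k+1) → R) ⬝ᵥ (Fin.cons b u) = a * b + v ⬝ᵥ u := by
  rw [dotProduct, Fin.sum_univ_succ]
  simp [dotProduct]

lemma dot_update {k : ℕ} (x y : Fin k → R) (i : Fin k) (v : R) :
    x ⬝ᵥ (Function.update y i v) = x ⬝ᵥ y + x i * (v - y i) := by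
  classical
  have h1 : (fun j => x j * Function.update y i v j)
      = Function.update (fun j => x j * y j) i (x i * v) := by
    funext j
    by_cases hj : j = i
    · subst hj; simp
    · simp [Function.update_of_ne hj]
  rw [dotProduct, h1, Finset.sum_update_of_mem (Finset.mem_univ i)]
  have h2 : ∑ j ∈ Finset.univ \ {i}, x j * y j = (∑ j, x j * y j) - x i * y i := by
    rw [Finset.sum_sdiff_eq_sub (Finset.singleton_subset_iff.2 (Finset.mem_univ i))]
    simp
  rw [h2, dotProduct]
  ring

/-- If some coordinate of `x` is a unit, we can chain `x` to the last basis vector. -/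
lemma chain_of_unit {m : ℕ} (x : Fin (m+2) → R) (j : Fin (m+2)) (hu : IsUnit (x j)) :
    Chain x (Pi.single (Fin.last (m+1)) (1:R)) := by
  classical
  obtain ⟨v, hv⟩ := hu.exists_right_inv
  have h0l : (0 : Fin (m+2)) ≠ Fin.last (m+1) := by
    simp [Fin.ext_iff, Fin.last]
  by_cases hj : j = Fin.last (m+1)
  · subst hj
    set w : Fin (m+2) → R := Pi.single (Fin.last (m+1)) (x (Fin.last (m+1))) + Pi.single 0 1 with hw
    set w2 : Fin (m+2) → R := Pi.single 0 1 + Pi.single (Fin.last (m+1)) 1 with hw2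
    refine Relation.ReflTransGen.head (b := w) ⟨Pi.single (Fin.last (m+1)) v, ?_, ?_⟩
      (Relation.ReflTransGen.head (b := w2) ⟨Pi.single 0 1, ?_, ?_⟩
        (Relation.ReflTransGen.head ⟨Pi.single (Fin.last (m+1)) 1, ?_, ?_⟩
          Relation.ReflTransGen.refl))
    · rw [dot_single]; exact hv
    · rw [hw, add_dotProduct, dot_single, dot_single]
      simp [Pi.single_apply, h0l, hv]
    · rw [hw, add_dotProduct, dot_single, dot_single]
      simp [Pi.single_apply, h0l, Ne.symm h0l]
    · rw [hw2, add_dotProduct, dot_single, dot_single]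
      simp [Pi.single_apply, h0l, Ne.symm h0l]
    · rw [hw2, add_dotProduct, dot_single, dot_single]
      simp [Pi.single_apply, h0l, Ne.symm h0l]
    · rw [dot_single]
      simp
  · set w : Fin (m+2) → R := Pi.single j (x j) + Pi.single (Fin.last (m+1)) 1 with hw
    refine Relation.ReflTransGen.head (b := w) ⟨Pi.single j v, ?_, ?_⟩
      (Relation.ReflTransGen.head ⟨Pi.single (Fin.last (m+1)) 1, ?_, ?_⟩
        Relation.ReflTransGen.refl)
    · rw [dot_single]; exact hv
    · rw [hw, add_dotProduct, dot_single, dot_single]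
      simp [Pi.single_apply, hj, Ne.symm hj, hv]
    · rw [hw, add_dotProduct, dot_single, dot_single]
      simp [Pi.single_apply, hj, Ne.symm hj]
    · rw [dot_single]
      simp

lemma dance_unit_fst (a b : R) (h : IsUnit a) : Chain ![a, b] ![(0:R), 1] := by
  obtain ⟨v, hv⟩ := h.exists_right_inv
  refine Relation.ReflTransGen.head (b := ![a, 1]) ⟨![v, 0], ?_, ?_⟩
    (Relation.ReflTransGen.head ⟨![0, 1], ?_, ?_⟩ Relation.ReflTransGen.refl) <;>
    simp [dotProduct, Fin.sum_univ_two, hv]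

lemma dance_unit_snd (a b : R) (h : IsUnit b) : Chain ![a, b] ![(0:R), 1] := by
  obtain ⟨v, hv⟩ := h.exists_right_inv
  refine Relation.ReflTransGen.head (b := ![1, b]) ⟨![0, v], ?_, ?_⟩
    (Relation.ReflTransGen.head (b := ![1, 1]) ⟨![1, 0], ?_, ?_⟩
      (Relation.ReflTransGen.head ⟨![0, 1], ?_, ?_⟩ Relation.ReflTransGen.refl)) <;>
    simp [dotProduct, Fin.sum_univ_two, hv]

/-- The Euclidean dance: any unimodular pair chains to `(0, 1)`. -/
lemma dance : ∀ b a s t : R, a * s + b * t = 1 → Chain ![a, b] ![(0:R), 1] := by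
  have wf : WellFounded (Relation.TransGen (EuclideanDomain.r (R := R))) :=
    (EuclideanDomain.r_wellFounded).transGen
  intro b
  refine wf.induction
    (C := fun b => ∀ a s t : R, a * s + b * t = 1 → Chain ![a, b] ![(0:R), 1]) b ?_
  intro b ih a s t h1
  by_cases hbu : IsUnit b
  · exact dance_unit_snd a b hbu
  by_cases hb0 : b = 0
  · subst hb0
    rw [zero_mul, add_zero] at h1
    exact dance_unit_fst a 0 (IsUnit.of_mul_eq_one s h1)
  set s' := s % b with hs'
  set t' := t + s / b * a with ht'
  have h2 : a * s' + b * t' = 1 := by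
    rw [hs', ht', EuclideanDomain.mod_eq_sub_mul_div]
    calc a * (s - b * (s / b)) + b * (t + s / b * a)
        = a * s + b * t := by ring
      _ = 1 := h1
  by_cases hs'0 : s' = 0
  · rw [hs'0, mul_zero, zero_add] at h2
    exact absurd (IsUnit.of_mul_eq_one t' h2) hbu
  set a1 := a + b / s' * t' with ha1
  set b1 := b % s' with hb1
  have h3 : a1 * s' + b1 * t' = 1 := by
    rw [ha1, hb1, EuclideanDomain.mod_eq_sub_mul_div]
    calc (a + b / s' * t') * s' + (b - s' * (b / s')) * t'
        = a * s' + b * t' := by ring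
      _ = 1 := h2
  have htg : Relation.TransGen (EuclideanDomain.r (R := R)) b1 b :=
    Relation.TransGen.head (EuclideanDomain.mod_lt b hs'0)
      (Relation.TransGen.single (EuclideanDomain.mod_lt s hb0))
  have hrec : Chain ![a1, b1] ![(0:R), 1] := ih b1 htg a1 s' t' h3
  refine Relation.ReflTransGen.head ⟨![s', t'], ?_, ?_⟩ hrec
  · simpa [dotProduct, Fin.sum_univ_two] using h2
  · simpa [dotProduct, Fin.sum_univ_two] using h3

lemma chain_cons_zero {k : ℕ} {xt z : Fin (k+1) → R} (h : Chain xt z) :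
    Chain (Fin.cons (0:R) xt) (Fin.cons (0:R) z) := by
  induction h with
  | refl => exact Relation.ReflTransGen.refl
  | tail _ hstep ih =>
    obtain ⟨u, hb, hc⟩ := hstep
    refine Relation.ReflTransGen.tail ih ⟨Fin.cons 1 u, ?_, ?_⟩ <;>
      rw [cons_dot_cons] <;> simp [hb, hc]









lemma cons_dot {k : ℕ} (a : R) (v : Fin k → R) (w : Fin (k+1) → R) :
    (Fin.cons a v : Fin (k+1) → R) ⬝ᵥ w = a * w 0 + v ⬝ᵥ (fun i => w i.succ) := by
  rw [dotProduct, Fin.sum_univ_succ]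
  simp [dotProduct]

lemma cons_zero_single {m : ℕ} :
    (Fin.cons (0:R) (Pi.single (Fin.last (m+1)) (1:R)) : Fin (m+3) → R)
      = Pi.single (Fin.last (m+2)) 1 := by
  classical
  funext i
  refine Fin.cases ?_ (fun j => ?_) i
  · have : Fin.last (m+2) ≠ 0 := by simp [Fin.ext_iff, Fin.last]
    simp [Pi.single_apply, Ne.symm this]
  · rw [Fin.cons_succ]
    have hiff : (j.succ = Fin.last (m+2)) ↔ (j = Fin.last (m+1)) := by
      rw [← Fin.succ_last, Fin.succ_inj]
    simp [Pi.single_apply, hiff]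

lemma chain_step_aux {m : ℕ} (x : Fin (m+3) → R) (y' : Fin (m+3) → R) (xt : Fin (m+2) → R)
    (hG1 : x ⬝ᵥ y' = 1) (hdot : xt ⬝ᵥ (fun i => y' i.succ) = 1)
    (ih : ∀ (z : Fin (m+2) → R), (∃ u, z ⬝ᵥ u = 1) →
      Chain z (Pi.single (Fin.last (m+1)) (1:R))) :
    Chain x (Pi.single (Fin.last (m+2)) (1:R)) := by
  refine Relation.ReflTransGen.head (b := Fin.cons 0 xt) ⟨y', hG1, ?_⟩ ?_
  · rw [cons_dot, zero_mul, zero_add]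
    exact hdot
  · have h1 : Chain xt (Pi.single (Fin.last (m+1)) (1:R)) :=
      ih xt ⟨fun i => y' i.succ, hdot⟩
    have h2 := chain_cons_zero (R := R) h1
    rwa [cons_zero_single] at h2

/-- Main chain lemma: every unimodular vector chains to the last basis vector. -/
lemma chain_to_single : ∀ (m : ℕ) (x : Fin (m+2) → R), (∃ u, x ⬝ᵥ u = 1) →
    Chain x (Pi.single (Fin.last (m+1)) (1:R)) := by
  intro m
  induction m with
  | zero =>
    rintro x ⟨u, hu⟩
    have hu' : x 0 * u 0 + x 1 * u 1 = 1 := by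
      simpa [dotProduct, Fin.sum_univ_two] using hu
    have hd := dance (x 1) (x 0) (u 0) (u 1) hu'
    have hx : (![x 0, x 1] : Fin 2 → R) = x := by
      funext i; fin_cases i <;> rfl
    have ht : (![(0:R), 1] : Fin 2 → R) = Pi.single (Fin.last 1) (1:R) := by
      funext i
      fin_cases i <;> simp [Pi.single_apply, Fin.ext_iff, Fin.last]
    rwa [hx, ht] at hd
  | succ m ih =>
    rintro x ⟨y, hy⟩
    classical
    have hsplit : x 0 * y 0 + (x 1 * y 1
        + ∑ i : Fin (m+1), x i.succ.succ * y i.succ.succ) = 1 := by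
      have hexp : x ⬝ᵥ y = x 0 * y 0 + (x 1 * y 1
          + ∑ i : Fin (m+1), x i.succ.succ * y i.succ.succ) := by
        rw [dotProduct, Fin.sum_univ_succ]
        congr 1
        rw [Fin.sum_univ_succ, Fin.succ_zero_eq_one]
      rw [← hexp, hy]
    obtain ⟨M, c, hdvd, hcombo⟩ := gcd_combo (R := R) (fun i : Fin (m+1) => y i.succ.succ)
    have hcombo' : ∑ i : Fin (m+1), c i * y i.succ.succ = M := hcombo
    by_cases hM : M = 0
    · -- all of y₂,… vanish
      have htz : ∀ i : Fin (m+1), y i.succ.succ = 0 := by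
        intro i
        have := hdvd i
        rw [hM] at this
        exact zero_dvd_iff.1 this
      have hzero : ∑ i : Fin (m+1), x i.succ.succ * y i.succ.succ = 0 := by
        apply Finset.sum_eq_zero
        intro i _
        rw [htz i, mul_zero]
      have h4 : x 0 * y 0 + x 1 * y 1 = 1 := by
        linear_combination hsplit - hzero
      by_cases hy1 : y 1 = 0
      · rw [hy1, mul_zero, add_zero] at h4
        exact chain_of_unit x 0 (IsUnit.of_mul_eq_one _ h4)
      · obtain ⟨lam, hco⟩ := prime_avoid (x 0) 0 (y 1) (y 0) 0 (x 1) hy1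
          (by linear_combination h4)
        rw [zero_add] at hco
        obtain ⟨α, β, hαβ⟩ := hco
        set j2 : Fin (m+3) := ((0 : Fin (m+1)).succ.succ : Fin (m+3)) with hj2
        have hj20 : j2 ≠ 0 := Fin.succ_ne_zero _
        have hj21 : j2 ≠ 1 := by
          simp [hj2, Fin.ext_iff, Fin.val_succ]
          rw [Nat.mod_eq_of_lt (by omega)]; omega
        set y' := Function.update (Function.update y j2 (y j2 + lam * x 0)) 0
          (y 0 - lam * x j2) with hy'def
        have hyt1 : y' 1 = y 1 := by
          rw [hy'def, Function.update_of_ne (show (1 : Fin (m+3)) ≠ 0 by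
            simp [Fin.ext_iff]), Function.update_of_ne (Ne.symm hj21)]
        have hytj2 : y' j2 = lam * x 0 := by
          rw [hy'def, Function.update_of_ne hj20, Function.update_self]
          have : y j2 = 0 := htz 0
          rw [this, zero_add]
        have hG1 : x ⬝ᵥ y' = 1 := by
          rw [hy'def, dot_update, Function.update_of_ne (Ne.symm hj20), dot_update, hy]
          ring
        refine chain_step_aux x y' (Fin.cons β (Fin.cons α (0 : Fin m → R))) hG1 ?_ ih
        rw [cons_dot, cons_dot, zero_dotProduct, add_zero]
        have e1 : ((0 : Fin (m+2)).succ : Fin (m+3)) = 1 := Fin.succ_zero_eq_one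
        have e2 : (fun i : Fin (m+1) => y' i.succ.succ) 0 = y' j2 := rfl
        show β * y' (0 : Fin (m+2)).succ + α * (fun i : Fin (m+1) => y' i.succ.succ) 0 = 1
        rw [e1, e2, hyt1, hytj2]
        linear_combination hαβ
    · -- M ≠ 0
      choose d hd using hdvd
      have hsum : ∑ i : Fin (m+1), x i.succ.succ * y i.succ.succ
          = (∑ i : Fin (m+1), x i.succ.succ * d i) * M := by
        rw [Finset.sum_mul]
        apply Finset.sum_congr rfl
        intro i _
        rw [hd i]; ring
      obtain ⟨lam, hco⟩ := prime_avoid (x 0) (y 1) M (y 0) (x 1)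
        (∑ i : Fin (m+1), x i.succ.succ * d i) hM (by linear_combination hsplit - hsum)
      obtain ⟨α, β, hαβ⟩ := hco
      set y' := Function.update (Function.update y 1 (y 1 + lam * x 0)) 0
        (y 0 - lam * x 1) with hy'def
      have h10 : (1 : Fin (m+3)) ≠ 0 := by simp [Fin.ext_iff]
      have hyt1 : y' 1 = y 1 + lam * x 0 := by
        rw [hy'def, Function.update_of_ne h10, Function.update_self]
      have hytss : ∀ i : Fin (m+1), y' i.succ.succ = y i.succ.succ := by
        intro i
        have hne0 : (i.succ.succ : Fin (m+3)) ≠ 0 := Fin.succ_ne_zero _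
        have hne1 : (i.succ.succ : Fin (m+3)) ≠ 1 := by
          rw [Ne, Fin.ext_iff, Fin.val_succ, Fin.val_succ, Fin.val_one]; omega
        rw [hy'def, Function.update_of_ne hne0, Function.update_of_ne hne1]
      have hG1 : x ⬝ᵥ y' = 1 := by
        rw [hy'def, dot_update, Function.update_of_ne (Ne.symm h10), dot_update, hy]
        ring
      refine chain_step_aux x y' (Fin.cons α (fun i => β * c i)) hG1 ?_ ih
      rw [cons_dot]
      have e1 : ((0 : Fin (m+2)).succ : Fin (m+3)) = 1 := Fin.succ_zero_eq_one
      show α * y' (0 : Fin (m+2)).succ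
          + (fun i => β * c i) ⬝ᵥ (fun i : Fin (m+1) => y' i.succ.succ) = 1
      rw [e1, hyt1]
      have : (fun i => β * c i) ⬝ᵥ (fun i : Fin (m+1) => y' i.succ.succ) = β * M := by
        rw [dotProduct]
        have : ∀ i : Fin (m+1), (β * c i) * y' i.succ.succ = β * (c i * y i.succ.succ) := by
          intro i
          rw [hytss i]; ring
        rw [Finset.sum_congr rfl (fun i _ => this i), ← Finset.mul_sum, hcombo']
      rw [this]
      linear_combination hαβ




def lift {m : ℕ} (C : Matrix (Fin (m+1)) (Fin (m+1)) R) : Matrix (Fin (m+2)) (Fin (m+2)) R :=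
  Matrix.of fun i j =>
    if hi : i = Fin.last (m+1) then (if j = Fin.last (m+1) then 1 else 0)
    else if hj : j = Fin.last (m+1) then 0
    else C (i.castPred hi) (j.castPred hj)

lemma lift_last_last {m : ℕ} (C : Matrix (Fin (m+1)) (Fin (m+1)) R) :
    lift C (Fin.last (m+1)) (Fin.last (m+1)) = 1 := by simp [lift]

lemma lift_last_cast {m : ℕ} (C : Matrix (Fin (m+1)) (Fin (m+1)) R) (j : Fin (m+1)) :
    lift C (Fin.last (m+1)) j.castSucc = 0 := by
  simp [lift, (Fin.castSucc_lt_last j).ne]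

lemma lift_cast_last {m : ℕ} (C : Matrix (Fin (m+1)) (Fin (m+1)) R) (i : Fin (m+1)) :
    lift C i.castSucc (Fin.last (m+1)) = 0 := by
  simp [lift, (Fin.castSucc_lt_last i).ne]

lemma lift_cast_cast {m : ℕ} (C : Matrix (Fin (m+1)) (Fin (m+1)) R) (i j : Fin (m+1)) :
    lift C i.castSucc j.castSucc = C i j := by
  simp [lift, (Fin.castSucc_lt_last i).ne, (Fin.castSucc_lt_last j).ne]

lemma lift_mul {m : ℕ} (C₁ C₂ : Matrix (Fin (m+1)) (Fin (m+1)) R) :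
    lift C₁ * lift C₂ = lift (C₁ * C₂) := by
  ext i j
  rw [Matrix.mul_apply, Fin.sum_univ_castSucc]
  refine Fin.lastCases ?_ (fun i₀ => ?_) i
  · simp only [lift_last_cast, lift_last_last, zero_mul, Finset.sum_const_zero, one_mul, zero_add]
    refine Fin.lastCases ?_ (fun j₀ => ?_) j
    · rw [lift_last_last, lift_last_last]
    · rw [lift_last_cast, lift_last_cast]
  · simp only [lift_cast_last, zero_mul, add_zero, lift_cast_cast]
    refine Fin.lastCases ?_ (fun j₀ => ?_) j
    · simp only [lift_cast_last, mul_zero, Finset.sum_const_zero]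
    · simp only [lift_cast_cast, Matrix.mul_apply]

lemma lift_one {m : ℕ} : lift (1 : Matrix (Fin (m+1)) (Fin (m+1)) R) = 1 := by
  ext i j
  refine Fin.lastCases ?_ (fun i₀ => ?_) i <;> refine Fin.lastCases ?_ (fun j₀ => ?_) j
  · rw [lift_last_last, Matrix.one_apply_eq]
  · rw [lift_last_cast, Matrix.one_apply_ne (Ne.symm (Fin.castSucc_lt_last j₀).ne)]
  · rw [lift_cast_last, Matrix.one_apply_ne ((Fin.castSucc_lt_last i₀).ne)]
  · rw [lift_cast_cast]
    by_cases h : i₀ = j₀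
    · subst h; rw [Matrix.one_apply_eq, Matrix.one_apply_eq]
    · rw [Matrix.one_apply_ne h, Matrix.one_apply_ne (fun hc => h (Fin.castSucc_inj.1 hc))]

lemma lift_list_prod {m : ℕ} (l : List (Matrix (Fin (m+1)) (Fin (m+1)) R)) :
    lift l.prod = (l.map lift).prod := by
  induction l with
  | nil => simp [lift_one]
  | cons a l ih =>
    rw [List.prod_cons, List.map_cons, List.prod_cons, ← ih, lift_mul]

section Corner

variable {m : ℕ}

lemma last_ne_zero' : (Fin.last (m+1) : Fin (m+2)) ≠ 0 := by
  simp [Fin.ext_iff, Fin.last]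

def Pmat : Matrix (Fin (m+2)) (Fin (m+2)) R :=
  Matrix.of fun i j =>
    if j = Fin.last (m+1) then (if i = 0 then 1 else 0) else (if i = j then 1 else 0)

def Qmat (A : Matrix (Fin (m+2)) (Fin (m+2)) R) : Matrix (Fin (m+2)) (Fin (m+2)) R :=
  Matrix.of fun i j =>
    if i = Fin.last (m+1) then A 0 j else (if i = j then 1 else 0)

def Cmat (A : Matrix (Fin (m+2)) (Fin (m+2)) R) : Matrix (Fin (m+1)) (Fin (m+1)) R :=
  Matrix.of fun i j => if i = 0 then 0 else A i.castSucc j.castSucc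

def Mmat (A : Matrix (Fin (m+2)) (Fin (m+2)) R) : Matrix (Fin (m+2)) (Fin (m+2)) R :=
  Matrix.of fun i j =>
    if i = Fin.last (m+1) then A 0 j
    else if j = Fin.last (m+1) then 0
    else if i = 0 then 0 else A i j

lemma P_last_col (i : Fin (m+2)) :
    Pmat (R := R) i (Fin.last (m+1)) = if i = 0 then 1 else 0 := by simp [Pmat]

lemma P_cast_col (i : Fin (m+2)) (j : Fin (m+1)) :
    Pmat (R := R) i j.castSucc = if i = j.castSucc then 1 else 0 := by
  simp [Pmat, (Fin.castSucc_lt_last j).ne]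

lemma P_last_row (j : Fin (m+2)) : Pmat (R := R) (Fin.last (m+1)) j = 0 := by
  by_cases hj : j = Fin.last (m+1)
  · subst hj; simp [Pmat, last_ne_zero']
  · simp [Pmat, hj, Ne.symm hj]

lemma Q_last_row (A : Matrix (Fin (m+2)) (Fin (m+2)) R) (j : Fin (m+2)) :
    Qmat A (Fin.last (m+1)) j = A 0 j := by simp [Qmat]

lemma Q_cast_row (A : Matrix (Fin (m+2)) (Fin (m+2)) R) (i : Fin (m+1)) (j : Fin (m+2)) :
    Qmat A i.castSucc j = if i.castSucc = j then 1 else 0 := by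
  simp [Qmat, (Fin.castSucc_lt_last i).ne]

lemma M_last_row (A : Matrix (Fin (m+2)) (Fin (m+2)) R) (j : Fin (m+2)) :
    Mmat A (Fin.last (m+1)) j = A 0 j := by simp [Mmat]

lemma M_cast_last (A : Matrix (Fin (m+2)) (Fin (m+2)) R) (i : Fin (m+1)) :
    Mmat A i.castSucc (Fin.last (m+1)) = 0 := by
  simp [Mmat, (Fin.castSucc_lt_last i).ne]

lemma M_cast_cast (A : Matrix (Fin (m+2)) (Fin (m+2)) R) (i j : Fin (m+1)) :
    Mmat A i.castSucc j.castSucc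
      = if i.castSucc = 0 then 0 else A i.castSucc j.castSucc := by
  simp [Mmat, (Fin.castSucc_lt_last i).ne, (Fin.castSucc_lt_last j).ne]

lemma Pmat_idem : Pmat (R := R) (m := m) * Pmat = Pmat := by
  ext i j
  rw [Matrix.mul_apply, Fin.sum_univ_castSucc, P_last_row, mul_zero, add_zero]
  refine Fin.lastCases ?_ (fun i₀ => ?_) i
  · have h : ∀ k₀ : Fin (m+1),
        Pmat (R := R) (Fin.last (m+1)) k₀.castSucc * Pmat k₀.castSucc j = 0 := by
      intro k₀; rw [P_last_row, zero_mul]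
    rw [Finset.sum_congr rfl (fun k _ => h k), Finset.sum_const_zero, P_last_row]
  · have h : ∀ k₀ : Fin (m+1),
        Pmat (R := R) i₀.castSucc k₀.castSucc * Pmat k₀.castSucc j
          = if i₀ = k₀ then Pmat k₀.castSucc j else 0 := by
      intro k₀
      rw [P_cast_col]
      by_cases h : i₀ = k₀
      · subst h; simp
      · simp [h, fun hc => h (Fin.castSucc_inj.1 hc)]
    rw [Finset.sum_congr rfl (fun k _ => h k), Finset.sum_ite_eq]
    simp

lemma Qmat_idem (A : Matrix (Fin (m+2)) (Fin (m+2)) R)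
    (hcol : ∀ i, A i (Fin.last (m+1)) = 0) : Qmat A * Qmat A = Qmat A := by
  ext i j
  rw [Matrix.mul_apply, Fin.sum_univ_castSucc]
  refine Fin.lastCases ?_ (fun i₀ => ?_) i
  · have hQll : Qmat A (Fin.last (m+1)) (Fin.last (m+1)) = 0 := by
      rw [Q_last_row]; exact hcol 0
    rw [hQll, zero_mul, add_zero]
    refine Fin.lastCases ?_ (fun j₀ => ?_) j
    · have h : ∀ k₀ : Fin (m+1),
          Qmat A (Fin.last (m+1)) k₀.castSucc * Qmat A k₀.castSucc (Fin.last (m+1)) = 0 := by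
        intro k₀
        rw [Q_cast_row]
        simp [(Fin.castSucc_lt_last k₀).ne]
      rw [Finset.sum_congr rfl (fun k _ => h k), Finset.sum_const_zero, hQll]
    · have h : ∀ k₀ : Fin (m+1),
          Qmat A (Fin.last (m+1)) k₀.castSucc * Qmat A k₀.castSucc j₀.castSucc
            = if k₀ = j₀ then A 0 k₀.castSucc else 0 := by
        intro k₀
        rw [Q_last_row, Q_cast_row]
        by_cases h : k₀ = j₀
        · subst h; simp
        · simp [h, fun hc => h (Fin.castSucc_inj.1 hc)]
      rw [Finset.sum_congr rfl (fun k _ => h k), Finset.sum_ite_eq', Q_last_row]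
      simp
  · have hlast : Qmat A i₀.castSucc (Fin.last (m+1)) * Qmat A (Fin.last (m+1)) j = 0 := by
      rw [Q_cast_row]
      simp [(Fin.castSucc_lt_last i₀).ne]
    rw [hlast, add_zero]
    have h : ∀ k₀ : Fin (m+1),
        Qmat A i₀.castSucc k₀.castSucc * Qmat A k₀.castSucc j
          = if i₀ = k₀ then Qmat A k₀.castSucc j else 0 := by
      intro k₀
      rw [Q_cast_row]
      by_cases h : i₀ = k₀
      · subst h; simp
      · simp [h, fun hc => h (Fin.castSucc_inj.1 hc)]
    rw [Finset.sum_congr rfl (fun k _ => h k), Finset.sum_ite_eq]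
    simp

lemma liftC_mul_Q (A : Matrix (Fin (m+2)) (Fin (m+2)) R) :
    lift (Cmat A) * Qmat A = Mmat A := by
  ext i j
  rw [Matrix.mul_apply, Fin.sum_univ_castSucc]
  refine Fin.lastCases ?_ (fun i₀ => ?_) i
  · have h : ∀ k₀ : Fin (m+1),
        lift (Cmat A) (Fin.last (m+1)) k₀.castSucc * Qmat A k₀.castSucc j = 0 := by
      intro k₀; rw [lift_last_cast, zero_mul]
    rw [Finset.sum_congr rfl (fun k _ => h k), Finset.sum_const_zero, zero_add,
      lift_last_last, one_mul, Q_last_row, M_last_row]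
  · rw [lift_cast_last, zero_mul, add_zero]
    have h : ∀ k₀ : Fin (m+1),
        lift (Cmat A) i₀.castSucc k₀.castSucc * Qmat A k₀.castSucc j
          = Cmat A i₀ k₀ * (if k₀.castSucc = j then 1 else 0) := by
      intro k₀; rw [lift_cast_cast, Q_cast_row]
    rw [Finset.sum_congr rfl (fun k _ => h k)]
    refine Fin.lastCases ?_ (fun j₀ => ?_) j
    · have h2 : ∀ k₀ : Fin (m+1),
          Cmat A i₀ k₀ * (if k₀.castSucc = Fin.last (m+1) then (1:R) else 0) = 0 := by
        intro k₀
        simp [(Fin.castSucc_lt_last k₀).ne]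
      rw [Finset.sum_congr rfl (fun k _ => h2 k), Finset.sum_const_zero, M_cast_last]
    · have h2 : ∀ k₀ : Fin (m+1),
          Cmat A i₀ k₀ * (if k₀.castSucc = j₀.castSucc then (1:R) else 0)
            = if k₀ = j₀ then Cmat A i₀ k₀ else 0 := by
        intro k₀
        by_cases h : k₀ = j₀
        · subst h; simp
        · simp [h, fun hc => h (Fin.castSucc_inj.1 hc)]
      rw [Finset.sum_congr rfl (fun k _ => h2 k), Finset.sum_ite_eq', M_cast_cast]
      simp only [Finset.mem_univ, if_true]
      rw [Cmat]
      by_cases h : i₀ = 0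
      · subst h
        simp [Fin.castSucc_zero]
      · simp only [Matrix.of_apply]
        rw [if_neg h, if_neg (fun hc => h (by
          rwa [← Fin.castSucc_zero, Fin.castSucc_inj] at hc))]

lemma P_mul_M (A : Matrix (Fin (m+2)) (Fin (m+2)) R)
    (hrow : ∀ j, A (Fin.last (m+1)) j = 0) (hcol : ∀ i, A i (Fin.last (m+1)) = 0) :
    Pmat * Mmat A = A := by
  ext i j
  rw [Matrix.mul_apply, Fin.sum_univ_castSucc, P_last_col, M_last_row]
  refine Fin.lastCases ?_ (fun i₀ => ?_) i
  · have h : ∀ k₀ : Fin (m+1),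
        Pmat (R := R) (Fin.last (m+1)) k₀.castSucc * Mmat A k₀.castSucc j = 0 := by
      intro k₀; rw [P_last_row, zero_mul]
    rw [Finset.sum_congr rfl (fun k _ => h k), Finset.sum_const_zero, if_neg last_ne_zero',
      zero_mul, add_zero, hrow]
  · have h : ∀ k₀ : Fin (m+1),
        Pmat (R := R) i₀.castSucc k₀.castSucc * Mmat A k₀.castSucc j
          = if i₀ = k₀ then Mmat A k₀.castSucc j else 0 := by
      intro k₀
      rw [P_cast_col]
      by_cases h : i₀ = k₀
      · subst h; simp
      · simp [h, fun hc => h (Fin.castSucc_inj.1 hc)]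
    rw [Finset.sum_congr rfl (fun k _ => h k), Finset.sum_ite_eq]
    simp only [Finset.mem_univ, if_true]
    by_cases hi0 : i₀ = 0
    · subst hi0
      rw [if_pos Fin.castSucc_zero, one_mul]
      refine Fin.lastCases ?_ (fun j₀ => ?_) j
      · rw [M_cast_last, zero_add, Fin.castSucc_zero, hcol 0]
      · rw [M_cast_cast, if_pos Fin.castSucc_zero, zero_add, Fin.castSucc_zero]
    · have : ¬ (i₀.castSucc = 0) := fun hc => hi0 (by
        rwa [← Fin.castSucc_zero, Fin.castSucc_inj] at hc)
      rw [if_neg this, zero_mul, add_zero]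
      refine Fin.lastCases ?_ (fun j₀ => ?_) j
      · rw [M_cast_last, hcol]
      · rw [M_cast_cast, if_neg this]

lemma Cmat_det (A : Matrix (Fin (m+2)) (Fin (m+2)) R) : (Cmat A).det = 0 :=
  Matrix.det_eq_zero_of_row_eq_zero 0 (fun j => by simp [Cmat])

/-- The key corner factorization: a matrix with zero last row and column factors as
idempotent × lift(C) × idempotent with C singular. -/
lemma corner_factor (A : Matrix (Fin (m+2)) (Fin (m+2)) R)
    (hrow : ∀ j, A (Fin.last (m+1)) j = 0) (hcol : ∀ i, A i (Fin.last (m+1)) = 0)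
    (IH : ∀ (C : Matrix (Fin (m+1)) (Fin (m+1)) R), C.det = 0 →
      ∃ l : List (Matrix (Fin (m+1)) (Fin (m+1)) R), (∀ E ∈ l, E * E = E) ∧ C = l.prod) :
    ∃ l : List (Matrix (Fin (m+2)) (Fin (m+2)) R), (∀ E ∈ l, E * E = E) ∧ A = l.prod := by
  obtain ⟨lC, hlC, hCprod⟩ := IH (Cmat A) (Cmat_det A)
  refine ⟨Pmat :: (lC.map lift ++ [Qmat A]), ?_, ?_⟩
  · intro E hE
    rcases List.mem_cons.1 hE with rfl | hE
    · exact Pmat_idem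
    rcases List.mem_append.1 hE with hE | hE
    · obtain ⟨F, hF, rfl⟩ := List.mem_map.1 hE
      rw [lift_mul, hlC F hF]
    · rw [List.mem_singleton.1 hE]
      exact Qmat_idem A hcol
  · rw [List.prod_cons, List.prod_append, List.prod_singleton, ← lift_list_prod, ← hCprod,
      ← mul_assoc, mul_assoc, liftC_mul_Q, P_mul_M A hrow hcol]

end Corner





lemma single_one_vecMul {k : ℕ} (j : Fin k) (W : Matrix (Fin k) (Fin k) R) :
    (Pi.single j (1:R)) ᵥ* W = W j := by
  funext i
  simp [Matrix.vecMul, dotProduct, Pi.single_apply, ite_mul]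

lemma mulVec_single_one {k : ℕ} (j : Fin k) (A : Matrix (Fin k) (Fin k) R) :
    A *ᵥ (Pi.single j (1:R)) = fun i => A i j := by
  funext i
  simp [Matrix.mulVec, dotProduct, Pi.single_apply, mul_ite]

lemma aux : ∀ (m : ℕ) (A : Matrix (Fin (m+1)) (Fin (m+1)) R), A.det = 0 →
    ∃ l : List (Matrix (Fin (m+1)) (Fin (m+1)) R), (∀ E ∈ l, E * E = E) ∧ A = l.prod := by
  intro m
  induction m with
  | zero =>
    intro A hA
    have h00 : A 0 0 = 0 := by rw [← Matrix.det_fin_one A]; exact hA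
    have hA0 : A = 0 := by
      ext i j
      rw [Fin.eq_zero i, Fin.eq_zero j, h00]
      rfl
    refine ⟨[A], ?_, by simp⟩
    intro E hE
    rw [List.mem_singleton.1 hE, hA0]
    simp
  | succ m ih =>
    intro A hA
    classical
    -- Step 1: a unimodular right-kernel vector
    obtain ⟨x, hx0, hxA⟩ := Matrix.exists_mulVec_eq_zero_iff.2 hA
    obtain ⟨g, b, u, hg, hgb, hbu⟩ := extract_unimodular x hx0
    have hAb : A *ᵥ b = 0 := by
      funext i
      have h1 : (A *ᵥ x) i = 0 := by rw [hxA]; rfl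
      have h2 : (A *ᵥ x) i = g * (A *ᵥ b) i := by
        simp only [Matrix.mulVec, dotProduct, Finset.mul_sum]
        apply Finset.sum_congr rfl
        intro k _
        rw [hgb k]; ring
      rw [h2] at h1
      exact (mul_eq_zero.1 h1).resolve_left hg
    have hchain1 : Chain b (Pi.single (Fin.last (m+1)) (1:R)) :=
      chain_to_single m b ⟨u, hbu⟩
    -- column reduction via the transpose
    have hbT : b ᵥ* Aᵀ = 0 := by rw [Matrix.vecMul_transpose]; exact hAb
    obtain ⟨l₂, W, hl₂, hWprod, hWlast, -⟩ := engine _ b hchain1 Aᵀ hbT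
    have hA1 : A = Wᵀ * (l₂.prod)ᵀ := by
      have h := congrArg Matrix.transpose hWprod
      rw [Matrix.transpose_mul] at h
      simpa using h
    have hA₁col : ∀ i, Wᵀ i (Fin.last (m+1)) = 0 := by
      intro i
      have h := congrFun hWlast i
      rw [single_one_vecMul] at h
      exact h
    -- Step 2: a unimodular left-kernel vector of Wᵀ
    have hdet₁ : (Wᵀ).det = 0 :=
      Matrix.det_eq_zero_of_column_eq_zero (Fin.last (m+1)) hA₁col
    obtain ⟨v0, hv0, hv0A⟩ := Matrix.exists_vecMul_eq_zero_iff.2 hdet₁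
    obtain ⟨g', v, u', hg', hgv, hvu⟩ := extract_unimodular v0 hv0
    have hvA : v ᵥ* Wᵀ = 0 := by
      funext i
      have h1 : (v0 ᵥ* Wᵀ) i = 0 := by rw [hv0A]; rfl
      have h2 : (v0 ᵥ* Wᵀ) i = g' * (v ᵥ* Wᵀ) i := by
        simp only [Matrix.vecMul, dotProduct, Finset.mul_sum]
        apply Finset.sum_congr rfl
        intro k _
        rw [hgv k]; ring
      rw [h2] at h1
      exact (mul_eq_zero.1 h1).resolve_left hg'
    have hchain2 : Chain v (Pi.single (Fin.last (m+1)) (1:R)) :=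
      chain_to_single m v ⟨u', hvu⟩
    obtain ⟨l₁, A₂, hl₁, hA₂prod, hA₂row, hker⟩ := engine _ v hchain2 Wᵀ hvA
    have hrow₂ : ∀ j, A₂ (Fin.last (m+1)) j = 0 := by
      intro j
      have h := congrFun hA₂row j
      rw [single_one_vecMul] at h
      exact h
    have hcol₂ : ∀ i, A₂ i (Fin.last (m+1)) = 0 := by
      have h0 : Wᵀ *ᵥ (Pi.single (Fin.last (m+1)) (1:R)) = 0 := by
        rw [mulVec_single_one]
        funext i
        exact hA₁col i
      have h := hker _ h0
      rw [mulVec_single_one] at h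
      intro i
      exact congrFun h i
    obtain ⟨lC, hlCidem, hlCprod⟩ := corner_factor A₂ hrow₂ hcol₂ ih
    refine ⟨l₁ ++ lC ++ (l₂.map Matrix.transpose).reverse, ?_, ?_⟩
    · intro E hE
      rcases List.mem_append.1 hE with hE | hE
      · rcases List.mem_append.1 hE with hE | hE
        · exact hl₁ E hE
        · exact hlCidem E hE
      · rw [List.mem_reverse] at hE
        obtain ⟨F, hF, rfl⟩ := List.mem_map.1 hE
        rw [← Matrix.transpose_mul, hl₂ F hF]
    · rw [List.prod_append, List.prod_append, ← Matrix.transpose_list_prod,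
        ← hlCprod, ← hA₂prod, hA1]

end IdemProof

/-- Every singular `n × n` matrix over a commutative Euclidean domain is a
product of idempotent matrices. -/
theorem singular_matrix_is_product_of_idempotents_of_euclideanDomain
    (R : Type*) [EuclideanDomain R] (n : ℕ) (hn : 0 < n)
    (A : Matrix (Fin n) (Fin n) R) (hA : A.det = 0) :
    ∃ l : List (Matrix (Fin n) (Fin n) R),
      (∀ E ∈ l, E * E = E) ∧ A = l.prod := by
  obtain ⟨m, rfl⟩ : ∃ m, n = m + 1 := ⟨n - 1, (Nat.succ_pred_eq_of_pos hn).symm⟩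
  exact IdemProof.aux m A hA
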